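/- Fix real constants m, b, c. Define, for τ ∉ {0, c, 2c}, p(τ) = [−mτ³ + (2(2m−1)c+b)τ² − (2(2m−1)c²+3bc)τ + 2bc²] / [τ²(τ−c)(τ−2c)], A(τ) = τ²(τ−c)², B(τ) = (τ−c)[mτ² − (τ−c)(2(m−1)τ − b)], and C(τ) = −mτ². Then the identity A·(p² − p′) − B·p + C = −2bc(τ−c)² / (τ(τ−2c)) holds at every real τ with τ ∉ {0, c, 2c}, where p′ denotes the derivative of p. -/

import Mathlib

/-- The identity `A·(p² − p′) − B·p + C = −2bc(τ−c)²/(τ(τ−2c))`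
away from `{0, c, 2c}`. -/
theorem stmt_8 (m b c : ℝ)
    (p A B C : ℝ → ℝ)
    (hpdef : ∀ τ, p τ =
      (-m*τ^3 + (2*(2*m-1)*c + b)*τ^2 - (2*(2*m-1)*c^2 + 3*b*c)*τ + 2*b*c^2)
        / (τ^2*(τ-c)*(τ-2*c)))
    (hAdef : ∀ τ, A τ = τ^2*(τ-c)^2)
    (hBdef : ∀ τ, B τ = (τ-c) * (m*τ^2 - (τ-c)*(2*(m-1)*τ - b)))
    (hCdef : ∀ τ, C τ = -m*τ^2) :
    ∀ τ : ℝ, τ ≠ 0 → τ ≠ c → τ ≠ 2*c →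
      A τ * (p τ ^ 2 - deriv p τ) - B τ * p τ + C τ
        = -2*b*c*(τ-c)^2 / (τ*(τ-2*c)) := by
  intro τ h0 hc h2c
  have hpe : p = fun τ =>
      (-m*τ^3 + (2*(2*m-1)*c + b)*τ^2 - (2*(2*m-1)*c^2 + 3*b*c)*τ + 2*b*c^2)
        / (τ^2*(τ-c)*(τ-2*c)) := funext hpdef
  have hD : τ^2*(τ-c)*(τ-2*c) ≠ 0 := by
    have h1 : τ - c ≠ 0 := sub_ne_zero.mpr hc
    have h2 : τ - 2*c ≠ 0 := sub_ne_zero.mpr h2c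
    positivity
  have hN : HasDerivAt (fun τ : ℝ =>
      -m*τ^3 + (2*(2*m-1)*c + b)*τ^2 - (2*(2*m-1)*c^2 + 3*b*c)*τ + 2*b*c^2)
      (-m*(3*τ^2) + (2*(2*m-1)*c + b)*(2*τ) - (2*(2*m-1)*c^2 + 3*b*c)) τ := by
    have h := ((((hasDerivAt_pow 3 τ).const_mul (-m)).add
        ((hasDerivAt_pow 2 τ).const_mul (2*(2*m-1)*c + b))).sub
        ((hasDerivAt_id τ).const_mul (2*(2*m-1)*c^2 + 3*b*c))).add_const (2*b*c^2)
    simp only [id_eq] at h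
    refine h.congr_deriv ?_
    push_cast
    ring
  have hDd : HasDerivAt (fun τ : ℝ => τ^2*(τ-c)*(τ-2*c))
      ((2*τ*(τ-c) + τ^2)*(τ-2*c) + τ^2*(τ-c)) τ := by
    have h1 := (hasDerivAt_pow 2 τ).mul ((hasDerivAt_id τ).sub_const c)
    have h2 := h1.mul ((hasDerivAt_id τ).sub_const (2*c))
    simp only [id_eq, Pi.mul_apply] at h2
    refine h2.congr_deriv ?_
    push_cast
    ring
  have hp : HasDerivAt p
      (((-m*(3*τ^2) + (2*(2*m-1)*c + b)*(2*τ) - (2*(2*m-1)*c^2 + 3*b*c)) * (τ^2*(τ-c)*(τ-2*c))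
        - (-m*τ^3 + (2*(2*m-1)*c + b)*τ^2 - (2*(2*m-1)*c^2 + 3*b*c)*τ + 2*b*c^2)
          * ((2*τ*(τ-c) + τ^2)*(τ-2*c) + τ^2*(τ-c))) / (τ^2*(τ-c)*(τ-2*c))^2) τ := by
    rw [hpe]; exact hN.div hDd hD
  rw [hp.deriv, hpdef, hAdef, hBdef, hCdef]
  have h1 : τ - c ≠ 0 := sub_ne_zero.mpr hc
  have h2 : τ - 2*c ≠ 0 := sub_ne_zero.mpr h2c
  have h2' : τ - c*2 ≠ 0 := by rwa [mul_comm c]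
  field_simp
  ring
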